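/- Let μ ∈ (0, ∞) and let p ∈ [2, ∞) be a real number. For every y ∈ ℂ with y ≠ 0 and every v, w ∈ ℂ, one has Re[ (i + μ)·( (p/2)·|y|^{p−2}·(|v|² + |w|²) + ((p−2)/2)·|y|^{p−4}·(conj y)²·(v² + w²) ) ] ≥ ( μp/2 − ((p−2)/2)·√(1+μ²) )·|y|^{p−2}·(|v|² + |w|²). -/

import Mathlib

open Complex

/-- Pointwise coercivity estimate for the operator `(i+μ)Δ` in the a priori `L^p` estimate. -/
theorem pointwise_coercivity
    (μ p : ℝ) (hμ : 0 < μ) (hp : 2 ≤ p)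
    (y v w : ℂ) (hy : y ≠ 0) :
    ((Complex.I + (μ : ℂ)) *
        (((p / 2 : ℝ) : ℂ) * ((‖y‖ ^ (p - 2) : ℝ) : ℂ) *
            (((‖v‖ ^ 2 + ‖w‖ ^ 2 : ℝ)) : ℂ)
          + (((p - 2) / 2 : ℝ) : ℂ) * ((‖y‖ ^ (p - 4) : ℝ) : ℂ) *
            ((starRingEnd ℂ) y) ^ 2 * (v ^ 2 + w ^ 2))).re
      ≥ (μ * p / 2 - (p - 2) / 2 * Real.sqrt (1 + μ ^ 2)) *
          (‖y‖ ^ (p - 2)) * (‖v‖ ^ 2 + ‖w‖ ^ 2) := by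
  have hyp : 0 < ‖y‖ := norm_pos_iff.mpr hy
  set S : ℝ := ‖v‖ ^ 2 + ‖w‖ ^ 2 with hSdef
  have hS : 0 ≤ S := by positivity
  set B : ℂ := (((p - 2) / 2 : ℝ) : ℂ) * ((‖y‖ ^ (p - 4) : ℝ) : ℂ) *
      ((starRingEnd ℂ) y) ^ 2 * (v ^ 2 + w ^ 2) with hBdef
  have hq : 0 ≤ (p - 2) / 2 := by linarith
  -- first term
  have key1 : ((Complex.I + (μ : ℂ)) * (((p / 2 : ℝ) : ℂ) *
      ((‖y‖ ^ (p - 2) : ℝ) : ℂ) * ((S : ℝ) : ℂ))).re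
      = μ * (p / 2 * ‖y‖ ^ (p - 2) * S) := by
    simp [Complex.mul_re, Complex.add_re, Complex.add_im]
  -- abs of i + μ
  have habs : ‖Complex.I + (μ : ℂ)‖ = Real.sqrt (1 + μ ^ 2) := by
    rw [Complex.norm_def, Complex.normSq_apply]
    simp
    ring_nf
  -- abs of B
  have hvw : ‖v ^ 2 + w ^ 2‖ ≤ S := by
    calc ‖v ^ 2 + w ^ 2‖ ≤ ‖v ^ 2‖ + ‖w ^ 2‖ :=
          norm_add_le _ _
      _ = S := by simp [map_pow, hSdef]
  have hy42 : ‖y‖ ^ (p - 4) * ‖y‖ ^ 2 = ‖y‖ ^ (p - 2) := by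
    have : (‖y‖ : ℝ) ^ (2 : ℕ) = ‖y‖ ^ (2 : ℝ) := by
      rw [← Real.rpow_natCast]; norm_num
    rw [this, ← Real.rpow_add hyp]; congr 1; ring
  have hBabs : ‖B‖ ≤ (p - 2) / 2 * ‖y‖ ^ (p - 2) * S := by
    rw [hBdef]
    rw [norm_mul, norm_mul, norm_mul, norm_pow]
    simp only [Complex.norm_real, Real.norm_eq_abs, Complex.norm_conj]
    have habs4 : |‖y‖ ^ (p - 4)| = ‖y‖ ^ (p - 4) :=
      _root_.abs_of_nonneg (le_of_lt (Real.rpow_pos_of_pos hyp _))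
    rw [_root_.abs_of_nonneg hq, habs4]
    calc (p - 2) / 2 * ‖y‖ ^ (p - 4) * ‖y‖ ^ 2 *
          ‖v ^ 2 + w ^ 2‖
        ≤ (p - 2) / 2 * ‖y‖ ^ (p - 4) * ‖y‖ ^ 2 * S := by
          apply mul_le_mul_of_nonneg_left hvw; positivity
      _ = (p - 2) / 2 * ‖y‖ ^ (p - 2) * S := by
          rw [mul_assoc ((p-2)/2), hy42]
  have key2 : ((Complex.I + (μ : ℂ)) * B).re
      ≥ -(Real.sqrt (1 + μ ^ 2) * ((p - 2) / 2 * ‖y‖ ^ (p - 2) * S)) := by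
    have h1 : -‖(Complex.I + (μ : ℂ)) * B‖ ≤ ((Complex.I + (μ : ℂ)) * B).re := by
      have h := Complex.abs_re_le_norm ((Complex.I + (μ : ℂ)) * B)
      have h' := neg_abs_le (((Complex.I + (μ : ℂ)) * B).re)
      linarith
    have h2 : ‖(Complex.I + (μ : ℂ)) * B‖
        ≤ Real.sqrt (1 + μ ^ 2) * ((p - 2) / 2 * ‖y‖ ^ (p - 2) * S) := by
      rw [norm_mul, habs]
      exact mul_le_mul_of_nonneg_left hBabs (Real.sqrt_nonneg _)
    linarith
  calc ((Complex.I + (μ : ℂ)) * (((p / 2 : ℝ) : ℂ) * ((‖y‖ ^ (p - 2) : ℝ) : ℂ) *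
          ((S : ℝ) : ℂ) + B)).re
      = ((Complex.I + (μ : ℂ)) * (((p / 2 : ℝ) : ℂ) * ((‖y‖ ^ (p - 2) : ℝ) : ℂ) *
          ((S : ℝ) : ℂ))).re + ((Complex.I + (μ : ℂ)) * B).re := by
        rw [mul_add, Complex.add_re]
    _ ≥ μ * (p / 2 * ‖y‖ ^ (p - 2) * S)
        - Real.sqrt (1 + μ ^ 2) * ((p - 2) / 2 * ‖y‖ ^ (p - 2) * S) := by
        rw [key1]; linarith
    _ = (μ * p / 2 - (p - 2) / 2 * Real.sqrt (1 + μ ^ 2)) * ‖y‖ ^ (p - 2) * S := by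
        ring
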